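/- There is no bounded map $f : B_{c_0} \to Y^*$, with $Y^*$ a separable dual Banach space, such that $f$ is weak-to-weak* sequentially continuous, injective, and $f^{-1}$ is uniformly continuous. -/

import Mathlib

open Filter NormedSpace

/-- The closed unit ball of `c₀`, realized inside `ℓ_∞`. -/
def BallC0 : Set (lp (fun _ : ℕ => ℝ) ⊤) :=
  {x | Tendsto (fun n : ℕ => (x : ∀ _ : ℕ, ℝ) n) atTop (nhds 0) ∧ ‖x‖ ≤ 1}

namespace NoC0Aux

noncomputable abbrev en (n : ℕ) : lp (fun _ : ℕ => ℝ) ⊤ := lp.single ⊤ n (1 : ℝ)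

lemma en_self (n : ℕ) : (en n : ∀ _ : ℕ, ℝ) n = 1 := lp.single_apply_self ⊤ n 1

lemma en_ne {i n : ℕ} (h : i ≠ n) : (en n : ∀ _ : ℕ, ℝ) i = 0 :=
  lp.single_apply_ne ⊤ n 1 h

/-- The key sequence construction. -/
lemma exists_seq (x : lp (fun _ : ℕ => ℝ) ⊤) (hx : x ∈ BallC0) :
    ∃ u : ℕ → lp (fun _ : ℕ => ℝ) ⊤, (∀ n, u n ∈ BallC0) ∧
      (∀ a : lp (fun _ : ℕ => ℝ) 1,
        Tendsto (fun n => ∑' i : ℕ, (a : ∀ _ : ℕ, ℝ) i * (u n : ∀ _ : ℕ, ℝ) i)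
          atTop (nhds (∑' i : ℕ, (a : ∀ _ : ℕ, ℝ) i * (x : ∀ _ : ℕ, ℝ) i))) ∧
      (∀ᶠ n in atTop, (1:ℝ)/2 < ‖u n - x‖) := by
  obtain ⟨hx0, hx1⟩ := hx
  set c : ℕ → ℝ := fun n => ‖x + en n‖ with hc
  have hcoord : ∀ n i, ((x + en n : lp (fun _ : ℕ => ℝ) ⊤) : ∀ _ : ℕ, ℝ) i
      = (x : ∀ _ : ℕ, ℝ) i + (en n : ∀ _ : ℕ, ℝ) i := by
    intro n i; rw [lp.coeFn_add]; rfl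
  have habs : ∀ i, |(x : ∀ _ : ℕ, ℝ) i| ≤ 1 := by
    intro i
    have h := lp.norm_apply_le_norm (E := fun _ : ℕ => ℝ) ENNReal.top_ne_zero x i
    rw [Real.norm_eq_abs] at h
    exact h.trans hx1
  have hlow : ∀ n, |(x : ∀ _ : ℕ, ℝ) n + 1| ≤ c n := by
    intro n
    have h := lp.norm_apply_le_norm (E := fun _ : ℕ => ℝ) ENNReal.top_ne_zero (x + en n) n
    rw [Real.norm_eq_abs, hcoord, en_self] at h
    exact h
  have hupp : ∀ n, c n ≤ max 1 |(x : ∀ _ : ℕ, ℝ) n + 1| := by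
    intro n
    refine lp.norm_le_of_forall_le (le_trans zero_le_one (le_max_left _ _)) ?_
    intro i
    rcases eq_or_ne i n with rfl | h
    · simp only [hcoord, en_self, Real.norm_eq_abs]
      exact le_max_right _ _
    · simp only [hcoord, en_ne h, add_zero, Real.norm_eq_abs]
      exact le_trans (habs i) (le_max_left _ _)
  have hA : Tendsto (fun n => |(x : ∀ _ : ℕ, ℝ) n + 1|) atTop (nhds 1) := by
    have h1 : Tendsto (fun n => (x : ∀ _ : ℕ, ℝ) n + 1) atTop (nhds 1) := by
      simpa using hx0.add (tendsto_const_nhds (x := (1:ℝ)))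
    simpa [Function.comp_def] using (continuous_abs.tendsto (1:ℝ)).comp h1
  have hB : Tendsto (fun n => max 1 |(x : ∀ _ : ℕ, ℝ) n + 1|) atTop (nhds 1) := by
    simpa using (tendsto_const_nhds (x := (1:ℝ))).max hA
  have hc1 : Tendsto c atTop (nhds 1) :=
    tendsto_of_tendsto_of_tendsto_of_le_of_le hA hB hlow hupp
  have hcinv : Tendsto (fun n => (c n)⁻¹) atTop (nhds 1) := by
    simpa using hc1.inv₀ one_ne_zero
  have hucoord : ∀ n i, (((c n)⁻¹ • (x + en n) : lp (fun _ : ℕ => ℝ) ⊤) : ∀ _ : ℕ, ℝ) i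
      = (c n)⁻¹ * ((x : ∀ _ : ℕ, ℝ) i + (en n : ∀ _ : ℕ, ℝ) i) := by
    intro n i
    rw [lp.coeFn_smul, Pi.smul_apply, hcoord]
    rfl
  refine ⟨fun n => (c n)⁻¹ • (x + en n), ?_, ?_, ?_⟩
  · -- membership in BallC0
    intro n
    constructor
    · have hev : (fun i => (c n)⁻¹ * ((x : ∀ _ : ℕ, ℝ) i + (en n : ∀ _ : ℕ, ℝ) i))
          =ᶠ[atTop] fun i => (c n)⁻¹ * (x : ∀ _ : ℕ, ℝ) i := by
        filter_upwards [eventually_gt_atTop n] with i hi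
        rw [en_ne (Nat.ne_of_gt hi), add_zero]
      have : Tendsto (fun i => (c n)⁻¹ * (x : ∀ _ : ℕ, ℝ) i) atTop (nhds 0) := by
        simpa using hx0.const_mul ((c n)⁻¹)
      refine Tendsto.congr' ?_ this
      · refine hev.symm.trans ?_
        apply Filter.EventuallyEq.of_eq
        funext i
        rw [hucoord]
    · rw [norm_smul, Real.norm_eq_abs, abs_inv, abs_of_nonneg (norm_nonneg _)]
      rcases eq_or_lt_of_le (norm_nonneg (x + en n)) with h0 | h0
      · rw [← h0]; simp
      · rw [inv_mul_cancel₀ (ne_of_gt h0)]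
  · -- weak convergence
    intro a
    have ha1 : Summable fun i => ‖(a : ∀ _ : ℕ, ℝ) i‖ := by
      have := (lp.memℓp a).summable (p := 1) (by norm_num)
      simpa using this
    have haS : Summable fun i => (a : ∀ _ : ℕ, ℝ) i := ha1.of_norm
    have hax : Summable fun i => (a : ∀ _ : ℕ, ℝ) i * (x : ∀ _ : ℕ, ℝ) i := by
      refine Summable.of_norm (ha1.mul_right 1 |>.of_nonneg_of_le (fun i => norm_nonneg _) ?_)
      intro i
      rw [norm_mul]
      exact mul_le_mul_of_nonneg_left (by simpa [Real.norm_eq_abs] using habs i)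
        (norm_nonneg _)
    have haen : ∀ n, Summable fun i => (a : ∀ _ : ℕ, ℝ) i * (en n : ∀ _ : ℕ, ℝ) i := by
      intro n
      apply summable_of_ne_finset_zero (s := {n})
      intro i hi
      rw [en_ne (by simpa using hi), mul_zero]
    have htsum : ∀ n, (∑' i, (a : ∀ _ : ℕ, ℝ) i
          * (((c n)⁻¹ • (x + en n) : lp (fun _ : ℕ => ℝ) ⊤) : ∀ _ : ℕ, ℝ) i)
        = (c n)⁻¹ * ((∑' i, (a : ∀ _ : ℕ, ℝ) i * (x : ∀ _ : ℕ, ℝ) i)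
            + (a : ∀ _ : ℕ, ℝ) n) := by
      intro n
      have h1 : ∀ i, (a : ∀ _ : ℕ, ℝ) i
            * (((c n)⁻¹ • (x + en n) : lp (fun _ : ℕ => ℝ) ⊤) : ∀ _ : ℕ, ℝ) i
          = (c n)⁻¹ * ((a : ∀ _ : ℕ, ℝ) i * (x : ∀ _ : ℕ, ℝ) i
              + (a : ∀ _ : ℕ, ℝ) i * (en n : ∀ _ : ℕ, ℝ) i) := by
        intro i; rw [hucoord]; ring
      rw [tsum_congr h1, tsum_mul_left, hax.tsum_add (haen n)]
      congr 1
      congr 1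
      rw [tsum_eq_single n]
      · rw [en_self, mul_one]
      · intro i hi; rw [en_ne hi, mul_zero]
    have han : Tendsto (fun n => (a : ∀ _ : ℕ, ℝ) n) atTop (nhds 0) :=
      haS.tendsto_atTop_zero
    have : Tendsto (fun n => (c n)⁻¹ * ((∑' i, (a : ∀ _ : ℕ, ℝ) i * (x : ∀ _ : ℕ, ℝ) i)
        + (a : ∀ _ : ℕ, ℝ) n)) atTop
        (nhds (∑' i, (a : ∀ _ : ℕ, ℝ) i * (x : ∀ _ : ℕ, ℝ) i)) := by
      have := hcinv.mul ((tendsto_const_nhds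
        (x := ∑' i, (a : ∀ _ : ℕ, ℝ) i * (x : ∀ _ : ℕ, ℝ) i)).add han)
      simpa using this
    exact this.congr (fun n => (htsum n).symm)
  · -- eventual norm lower bound
    have hg : Tendsto (fun n => |(c n)⁻¹ * ((x : ∀ _ : ℕ, ℝ) n + 1) - (x : ∀ _ : ℕ, ℝ) n|)
        atTop (nhds 1) := by
      have h1 : Tendsto (fun n => (c n)⁻¹ * ((x : ∀ _ : ℕ, ℝ) n + 1) - (x : ∀ _ : ℕ, ℝ) n)
          atTop (nhds 1) := by
        have h2 : Tendsto (fun n => (x : ∀ _ : ℕ, ℝ) n + 1) atTop (nhds 1) := by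
          simpa using hx0.add (tendsto_const_nhds (x := (1:ℝ)))
        simpa using (hcinv.mul h2).sub hx0
      simpa [Function.comp_def] using (continuous_abs.tendsto (1:ℝ)).comp h1
    have hev : ∀ᶠ n in atTop,
        (1:ℝ)/2 < |(c n)⁻¹ * ((x : ∀ _ : ℕ, ℝ) n + 1) - (x : ∀ _ : ℕ, ℝ) n| :=
      hg.eventually (eventually_gt_nhds (by norm_num))
    filter_upwards [hev] with n hn
    refine lt_of_lt_of_le hn ?_
    have := lp.norm_apply_le_norm (E := fun _ : ℕ => ℝ) ENNReal.top_ne_zero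
      ((c n)⁻¹ • (x + en n) - x) n
    rw [Real.norm_eq_abs, lp.coeFn_sub, Pi.sub_apply, hucoord, en_self] at this
    exact this

end NoC0Aux

theorem no_weakly_continuous_embedding_of_c0_ball
    (Y : Type*) [NormedAddCommGroup Y] [NormedSpace ℝ Y] [CompleteSpace Y]
    [TopologicalSpace.SeparableSpace (StrongDual ℝ Y)]
    (f : lp (fun _ : ℕ => ℝ) ⊤ → StrongDual ℝ Y)
    (hbdd : ∃ R : ℝ, ∀ x ∈ BallC0, ‖f x‖ ≤ R)
    (hcont : ∀ x ∈ BallC0, ∀ u : ℕ → lp (fun _ : ℕ => ℝ) ⊤, (∀ n, u n ∈ BallC0) →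
      (∀ a : lp (fun _ : ℕ => ℝ) 1,
        Tendsto (fun n => ∑' i : ℕ, (a : ∀ _ : ℕ, ℝ) i * (u n : ∀ _ : ℕ, ℝ) i)
          atTop (nhds (∑' i : ℕ, (a : ∀ _ : ℕ, ℝ) i * (x : ∀ _ : ℕ, ℝ) i))) →
      ∀ y : Y, Tendsto (fun n => f (u n) y) atTop (nhds (f x y)))
    (hinj : ∀ x ∈ BallC0, ∀ y ∈ BallC0, f x = f y → x = y)
    (hunif : ∀ ε > (0 : ℝ), ∃ δ > (0 : ℝ), ∀ x ∈ BallC0, ∀ y ∈ BallC0,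
      ‖f x - f y‖ ≤ δ → ‖x - y‖ ≤ ε) :
    False := by
  classical
  obtain ⟨R, hR⟩ := hbdd
  obtain ⟨δ, hδpos, hδ⟩ := hunif (1/2) (by norm_num)
  -- the image set and its weak* closure
  set S : Set (WeakDual ℝ Y) := (fun x => StrongDual.toWeakDual (f x)) '' BallC0 with hS
  set K : Set (WeakDual ℝ Y) := closure S with hKdef
  have hball : IsCompact (WeakDual.toStrongDual ⁻¹' Metric.closedBall (0 : StrongDual ℝ Y) R) :=
    WeakDual.isCompact_closedBall (𝕜 := ℝ) 0 R
  have hSsub : S ⊆ WeakDual.toStrongDual ⁻¹' Metric.closedBall (0 : StrongDual ℝ Y) R := by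
    rintro _ ⟨x, hx, rfl⟩
    simpa [Metric.mem_closedBall, dist_eq_norm] using hR x hx
  have hKsub : K ⊆ WeakDual.toStrongDual ⁻¹' Metric.closedBall (0 : StrongDual ℝ Y) R :=
    closure_minimal hSsub hball.isClosed
  have hKcomp : IsCompact K := hball.of_isClosed_subset isClosed_closure hKsub
  have h0mem : (0 : lp (fun _ : ℕ => ℝ) ⊤) ∈ BallC0 := by
    constructor
    · have : ∀ n : ℕ, ((0 : lp (fun _ : ℕ => ℝ) ⊤) : ∀ _ : ℕ, ℝ) n = 0 := by
        intro n; rw [lp.coeFn_zero]; rfl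
      simpa [this] using tendsto_const_nhds (x := (0:ℝ))
    · rw [norm_zero]; exact zero_le_one
  have hKne : K.Nonempty := ⟨_, subset_closure ⟨0, h0mem, rfl⟩⟩
  haveI : CompactSpace K := isCompact_iff_compactSpace.mp hKcomp
  haveI : Nonempty K := hKne.to_subtype
  -- countable dense family in the dual
  haveI : Nonempty (StrongDual ℝ Y) := ⟨0⟩
  set d : ℕ → StrongDual ℝ Y := TopologicalSpace.denseSeq (StrongDual ℝ Y) with hd
  have hdense : DenseRange d := TopologicalSpace.denseRange_denseSeq (StrongDual ℝ Y)
  set C : ℕ → Set K := fun j =>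
    Subtype.val ⁻¹' (WeakDual.toStrongDual ⁻¹' Metric.closedBall (d j) (δ/3)) with hC
  have hCclosed : ∀ j, IsClosed (C j) :=
    fun j => ((WeakDual.isCompact_closedBall (𝕜 := ℝ) (d j) (δ/3)).isClosed).preimage
      continuous_subtype_val
  have hCcover : (⋃ j, C j) = Set.univ := by
    ext g
    simp only [Set.mem_iUnion, Set.mem_univ, iff_true]
    obtain ⟨j, hj⟩ := hdense.exists_dist_lt (WeakDual.toStrongDual g.val)
      (ε := δ/3) (by linarith)
    exact ⟨j, le_of_lt hj⟩
  obtain ⟨j, k, hk⟩ := nonempty_interior_of_iUnion_of_closed hCclosed hCcover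
  obtain ⟨U, hUopen, hUeq⟩ := isOpen_induced_iff.mp (isOpen_interior (s := C j))
  have hkU : (k : WeakDual ℝ Y) ∈ U := by
    have : k ∈ Subtype.val ⁻¹' U := by rw [hUeq]; exact hk
    exact this
  have keyU : ∀ z, z ∈ K → z ∈ U → ‖WeakDual.toStrongDual z - d j‖ ≤ δ/3 := by
    intro z hzK hzU
    have h1 : (⟨z, hzK⟩ : K) ∈ interior (C j) := by
      rw [← hUeq]; exact hzU
    have h2 := interior_subset h1
    simpa [hC, Metric.mem_closedBall, dist_eq_norm] using h2
  -- pick x ∈ BallC0 with f x in the "small" open set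
  obtain ⟨s₀, hs₀U, hs₀S⟩ := mem_closure_iff.mp k.property U hUopen hkU
  obtain ⟨x, hxB, rfl⟩ := hs₀S
  -- the bad sequence
  obtain ⟨u, humem, huw, hufar⟩ := NoC0Aux.exists_seq x hxB
  have hptw := hcont x hxB u humem huw
  have hweak : Tendsto (fun n => StrongDual.toWeakDual (f (u n))) atTop
      (nhds (StrongDual.toWeakDual (f x))) := by
    rw [tendsto_iff_forall_eval_tendsto_topDualPairing]
    intro y
    exact hptw y
  have hUev : ∀ᶠ n in atTop, StrongDual.toWeakDual (f (u n)) ∈ U :=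
    hweak (hUopen.mem_nhds hs₀U)
  have hfx : ‖f x - d j‖ ≤ δ/3 := keyU _ (subset_closure ⟨x, hxB, rfl⟩) hs₀U
  have hnear : ∀ᶠ n in atTop, ‖f (u n) - f x‖ ≤ δ := by
    filter_upwards [hUev] with n hn
    have h1 : ‖f (u n) - d j‖ ≤ δ/3 :=
      keyU _ (subset_closure ⟨u n, humem n, rfl⟩) hn
    have h2 : ‖f (u n) - f x‖ ≤ ‖f (u n) - d j‖ + ‖f x - d j‖ := by
      have := norm_sub_le (f (u n) - d j) (f x - d j)
      simpa [sub_sub_sub_cancel_right] using this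
    linarith
  have hclose : ∀ᶠ n in atTop, ‖u n - x‖ ≤ 1/2 := by
    filter_upwards [hnear] with n hn
    exact hδ (u n) (humem n) x hxB hn
  obtain ⟨n, hn1, hn2⟩ := (hclose.and hufar).exists
  linarith
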